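/- Let (M,ω,Φ) satisfy the q-Hamiltonian Dirac condition, i.e. the pair (dΦ, ω) defines a strong Dirac morphism (TM⊕T*M, TM) ⇢ (TG⊕T*G, E_G) where E_G is the Cartan-Dirac structure. Then for connected M, dim M is even if and only if det(Ad_{Φ(m)}) = 1 for all m ∈ M. (Pointwise version: if (Θ,ω): (V⊕V*, V) ⇢ (𝔤⊕𝔤*, E_A) is a strong Dirac morphism where E_A is the Lagrangian subspace corresponding to A ∈ O(𝔤), then dim V is even iff det(A) = 1.) -/

import Mathlib

open RealInnerProductSpace

/-- The split symmetric pairing on `V ⊕ V* ≅ V ⊕ V`, where `V*` is identified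
with `V` via the inner product. -/
def diracPairE {V : Type*} [NormedAddCommGroup V] [InnerProductSpace ℝ V]
    (x y : V × V) : ℝ :=
  ⟪x.2, y.1⟫ + ⟪y.2, x.1⟫

/-- A subspace of `V ⊕ V* ≅ V ⊕ V` is Lagrangian iff it coincides with its
orthogonal relative to the split pairing. -/
def IsLagrangianE {V : Type*} [NormedAddCommGroup V] [InnerProductSpace ℝ V]
    (E : Submodule ℝ (V × V)) : Prop :=
  ∀ x, (∀ y ∈ E, diracPairE x y = 0) ↔ x ∈ E

/-- The Lagrangian subspace `E_A = {((I - A⁻¹)v, (I + A⁻¹)v/2) : v ∈ V}`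
associated to an orthogonal transformation `A ∈ O(V)`. -/
noncomputable def lagrangianOf {V : Type*} [NormedAddCommGroup V] [InnerProductSpace ℝ V]
    (A : V ≃ₗᵢ[ℝ] V) : Submodule ℝ (V × V) :=
  LinearMap.range (LinearMap.prod
    (LinearMap.id - A.symm.toLinearEquiv.toLinearMap)
    ((2⁻¹ : ℝ) • (LinearMap.id + A.symm.toLinearEquiv.toLinearMap)))

/-- The relation defined by a morphism `(Θ, ω) : V ⊕ V* ⇢ 𝔤 ⊕ 𝔤* ≅ 𝔤 ⊕ 𝔤`:
`(v, α) ∼ (w, β)` iff `w = Θv` and `α = ι_v ω + Θ*β`. -/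
def mixedRel {V G : Type*} [AddCommGroup V] [Module ℝ V]
    [NormedAddCommGroup G] [InnerProductSpace ℝ G]
    (Θ : V →ₗ[ℝ] G) (ω : V →ₗ[ℝ] Module.Dual ℝ V)
    (x : V × Module.Dual ℝ V) (y : G × G) : Prop :=
  y.1 = Θ x.1 ∧ ∀ u : V, x.2 u = ω x.1 u + ⟪y.2, Θ u⟫


open Module Matrix

section Aux

lemma alt_nondeg_even {V : Type*} [AddCommGroup V] [Module ℝ V] [FiniteDimensional ℝ V]
    (B : LinearMap.BilinForm ℝ V) (hB : ∀ v, B v v = 0) (hnd : B.Nondegenerate) :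
    Even (finrank ℝ V) := by
  classical
  have hskew : ∀ v u, B v u = - B u v := by
    intro v u
    have h := hB (v + u)
    simp only [map_add, LinearMap.add_apply, hB] at h
    linarith
  set b := finBasis ℝ V
  set M := BilinForm.toMatrix b B with hM
  have hdet : M.det ≠ 0 := (LinearMap.BilinForm.nondegenerate_iff_det_ne_zero b).1 hnd
  have ht : Mᵀ = -M := by
    ext i j
    simp only [Matrix.transpose_apply, Matrix.neg_apply, hM,
      BilinForm.toMatrix_apply]
    exact hskew _ _
  have h1 : M.det = (-1 : ℝ) ^ finrank ℝ V * M.det := by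
    conv_lhs => rw [← Matrix.det_transpose, ht]
    rw [Matrix.det_neg, Fintype.card_fin]
  have h2 : ((-1 : ℝ) ^ finrank ℝ V) = 1 := by
    have := mul_right_cancel₀ hdet (by linarith [h1] : (1 : ℝ) * M.det = (-1 : ℝ) ^ finrank ℝ V * M.det)
    linarith
  exact (neg_one_pow_eq_one_iff_even (by norm_num : (-1 : ℝ) ≠ 1)).1 h2

lemma even_iff_even_ker {V : Type*} [AddCommGroup V] [Module ℝ V] [FiniteDimensional ℝ V]
    (ω : V →ₗ[ℝ] Module.Dual ℝ V) (hω : ∀ v, ω v v = 0) :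
    (Even (finrank ℝ V) ↔ Even (finrank ℝ (LinearMap.ker ω))) := by
  have hskew : ∀ v u, ω v u = - ω u v := by
    intro v u
    have h := hω (v + u)
    simp only [map_add, LinearMap.add_apply, hω] at h
    linarith
  obtain ⟨W, hW⟩ := Submodule.exists_isCompl (LinearMap.ker ω)
  have hnd : (LinearMap.BilinForm.restrict ω W).Nondegenerate := by
    refine LinearMap.BilinForm.Nondegenerate.ofSeparatingLeft ?_
    intro w hw
    have hwker : (w : V) ∈ LinearMap.ker ω := by
      rw [LinearMap.mem_ker]
      ext u
      have hu : u ∈ LinearMap.ker ω ⊔ W := by rw [hW.sup_eq_top]; trivial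
      obtain ⟨a, ha, c, hc, rfl⟩ := Submodule.mem_sup.1 hu
      have h1 : ω (w : V) a = 0 := by
        rw [hskew]
        rw [LinearMap.mem_ker] at ha
        simp [ha]
      have h2 : ω (w : V) c = 0 := hw ⟨c, hc⟩
      simp [h1, h2]
    have : (w : V) ∈ LinearMap.ker ω ⊓ W := ⟨hwker, w.2⟩
    rw [hW.inf_eq_bot] at this
    exact Subtype.ext this
  have heven : Even (finrank ℝ W) :=
    alt_nondeg_even _ (fun v => hω v) hnd
  have hsum := Submodule.finrank_add_eq_of_isCompl hW
  constructor <;> intro h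
  · have : Even (finrank ℝ (LinearMap.ker ω) + finrank ℝ W) := by rw [hsum]; exact h
    rcases Nat.even_add.1 this with h'
    exact h'.2 heven
  · rw [← hsum]; exact Nat.even_add.2 (by tauto)

end Aux

section AuxDet
variable {ignore:Nat}

variable {E : Type*} [NormedAddCommGroup E] [InnerProductSpace ℝ E] [FiniteDimensional ℝ E]

lemma isom_toMatrix_symm (b : OrthonormalBasis (Fin (finrank ℝ E)) ℝ E) (A : E ≃ₗᵢ[ℝ] E) :
    LinearMap.toMatrix b.toBasis b.toBasis A.symm.toLinearEquiv.toLinearMap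
      = (LinearMap.toMatrix b.toBasis b.toBasis A.toLinearEquiv.toLinearMap)ᵀ := by
  ext i j
  rw [Matrix.transpose_apply, LinearMap.toMatrix_apply, LinearMap.toMatrix_apply,
    OrthonormalBasis.coe_toBasis_repr_apply, OrthonormalBasis.coe_toBasis_repr_apply,
    OrthonormalBasis.repr_apply_apply, OrthonormalBasis.repr_apply_apply]
  calc ⟪b i, A.symm.toLinearEquiv.toLinearMap (b j)⟫
      = ⟪A (b i), A (A.symm (b j))⟫ := (A.inner_map_map _ _).symm
    _ = ⟪b j, A.toLinearEquiv.toLinearMap (b i)⟫ := by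
        rw [A.apply_symm_apply]; exact real_inner_comm _ _

lemma isom_det_symm (A : E ≃ₗᵢ[ℝ] E) :
    LinearMap.det A.symm.toLinearEquiv.toLinearMap
      = LinearMap.det A.toLinearEquiv.toLinearMap := by
  let b := stdOrthonormalBasis ℝ E
  rw [← LinearMap.det_toMatrix b.toBasis, ← LinearMap.det_toMatrix b.toBasis,
    isom_toMatrix_symm b A, Matrix.det_transpose]

lemma isom_det_one_of_ker (A : E ≃ₗᵢ[ℝ] E)
    (h : LinearMap.ker (A.toLinearEquiv.toLinearMap + LinearMap.id) = ⊥) :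
    LinearMap.det A.toLinearEquiv.toLinearMap = 1 := by
  classical
  set f := A.toLinearEquiv.toLinearMap with hf
  set g := A.symm.toLinearEquiv.toLinearMap with hg
  have hcomp : f ∘ₗ (LinearMap.id + g) = f + LinearMap.id := by
    ext x
    simp [f, g, map_add]
  have hdeq : LinearMap.det (LinearMap.id + g) = LinearMap.det (f + LinearMap.id) := by
    let b := stdOrthonormalBasis ℝ E
    rw [← LinearMap.det_toMatrix b.toBasis, ← LinearMap.det_toMatrix b.toBasis]
    have : LinearMap.toMatrix b.toBasis b.toBasis (LinearMap.id + g)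
        = (LinearMap.toMatrix b.toBasis b.toBasis (f + LinearMap.id))ᵀ := by
      rw [map_add, map_add, Matrix.transpose_add, isom_toMatrix_symm b A,
        LinearMap.toMatrix_id, Matrix.transpose_one, add_comm]
    rw [this, Matrix.det_transpose]
  have hunit : IsUnit (f + LinearMap.id) :=
    LinearMap.isUnit_iff_ker_eq_bot _ |>.2 (by rw [← h])
  have hdet0 : LinearMap.det (f + LinearMap.id) ≠ 0 :=
    (LinearMap.isUnit_det _ hunit).ne_zero
  have := congrArg LinearMap.det hcomp
  rw [LinearMap.det_comp, hdeq] at this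
  exact mul_left_cancel₀ hdet0 (by linarith [this])

lemma det_prodMap {M N : Type*} [AddCommGroup M] [Module ℝ M] [FiniteDimensional ℝ M]
    [AddCommGroup N] [Module ℝ N] [FiniteDimensional ℝ N]
    (f : M →ₗ[ℝ] M) (g : N →ₗ[ℝ] N) :
    LinearMap.det (f.prodMap g) = LinearMap.det f * LinearMap.det g := by
  classical
  rw [← LinearMap.det_toMatrix ((finBasis ℝ M).prod (finBasis ℝ N)),
    LinearMap.toMatrix_prodMap, Matrix.det_fromBlocks_zero₂₁,
    LinearMap.det_toMatrix, LinearMap.det_toMatrix]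

lemma isom_det_eq_neg_one_pow (A : E ≃ₗᵢ[ℝ] E) :
    LinearMap.det A.toLinearEquiv.toLinearMap
      = (-1 : ℝ) ^ finrank ℝ (LinearMap.ker (A.toLinearEquiv.toLinearMap + LinearMap.id)) := by
  classical
  set f := A.toLinearEquiv.toLinearMap with hf
  set K := LinearMap.ker (f + LinearMap.id) with hK
  have hKmem : ∀ x, x ∈ K ↔ f x = -x := by
    intro x
    rw [hK, LinearMap.mem_ker, LinearMap.add_apply, LinearMap.id_apply, add_eq_zero_iff_eq_neg]
  have hKperp : ∀ x ∈ Kᗮ, f x ∈ Kᗮ := by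
    intro x hx
    rw [Submodule.mem_orthogonal] at hx ⊢
    intro u hu
    have hu' : f u = -u := (hKmem u).1 hu
    calc ⟪u, f x⟫ = ⟪-f u, f x⟫ := by rw [hu', neg_neg]
      _ = -⟪f u, f x⟫ := by rw [inner_neg_left]
      _ = -⟪u, x⟫ := by rw [show (f u) = A u from rfl, show (f x) = A x from rfl,
            A.inner_map_map]
      _ = 0 := by rw [hx u hu, neg_zero]
  -- restriction to Kᗮ as an isometry equiv
  let g : Kᗮ →ₗ[ℝ] Kᗮ := f.restrict hKperp
  have hginj : Function.Injective g := by
    intro x y hxy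
    have : f x = f y := by
      have := congrArg (Subtype.val) hxy
      simpa [g, LinearMap.restrict_apply] using this
    exact Subtype.ext (A.injective this)
  have hgbij : Function.Bijective g :=
    ⟨hginj, (LinearMap.injective_iff_surjective).1 hginj⟩
  let B : Kᗮ ≃ₗᵢ[ℝ] Kᗮ :=
    { LinearEquiv.ofBijective g hgbij with
      norm_map' := by
        intro x
        have : ((g x : Kᗮ) : E) = f x := rfl
        rw [show ‖(LinearEquiv.ofBijective g hgbij) x‖ = ‖(g x : E)‖ from rfl]
        rw [this]
        rw [show ‖x‖ = ‖(x : E)‖ from rfl]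
        exact A.norm_map _ }
  have hBker : LinearMap.ker (B.toLinearEquiv.toLinearMap + LinearMap.id) = ⊥ := by
    rw [LinearMap.ker_eq_bot']
    intro x hx
    have hfx : f x = -(x : E) := by
      have := congrArg (Subtype.val) (add_eq_zero_iff_eq_neg.1
        (by simpa [LinearMap.add_apply] using hx))
      simpa [B, g, LinearMap.restrict_apply] using this
    have hxK : (x : E) ∈ K := (hKmem _).2 hfx
    have : (x : E) ∈ K ⊓ Kᗮ := ⟨hxK, x.2⟩
    rw [Submodule.inf_orthogonal_eq_bot] at this
    exact Subtype.ext this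
  have hBdet : LinearMap.det B.toLinearEquiv.toLinearMap = 1 :=
    isom_det_one_of_ker B hBker
  -- decompose
  have hcompl : IsCompl K Kᗮ := Submodule.isCompl_orthogonal_of_hasOrthogonalProjection
  let e := K.prodEquivOfIsCompl Kᗮ hcompl
  have hconj : f = (e : (K × Kᗮ) →ₗ[ℝ] E) ∘ₗ
      ((-LinearMap.id : K →ₗ[ℝ] K).prodMap B.toLinearEquiv.toLinearMap) ∘ₗ
      (e.symm : E →ₗ[ℝ] (K × Kᗮ)) := by
    apply LinearMap.ext
    intro y
    obtain ⟨p, rfl⟩ := e.surjective y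
    simp only [LinearMap.comp_apply, LinearEquiv.coe_coe, LinearEquiv.symm_apply_apply]
    rw [Submodule.coe_prodEquivOfIsCompl' , Submodule.coe_prodEquivOfIsCompl']
    have h1 : f (p.1 : E) = -(p.1 : E) := (hKmem _).1 p.1.2
    have h2 : f (p.2 : E) = ((B.toLinearEquiv.toLinearMap p.2 : Kᗮ) : E) := rfl
    simp only [LinearMap.coe_prodMap, Prod.map_fst, Prod.map_snd, map_add, h1, h2,
      LinearMap.neg_apply, LinearMap.id_apply, Submodule.coe_neg]
  rw [hconj, LinearMap.det_conj, det_prodMap, hBdet, mul_one,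
    show (-LinearMap.id : K →ₗ[ℝ] K) = (-1 : ℝ) • LinearMap.id from by ext x; simp,
    LinearMap.det_smul, LinearMap.det_id, mul_one]

end AuxDet

/-- pointwise version of the q-Hamiltonian parity result: if
`(Θ, ω) : (V ⊕ V*, V) ⇢ (𝔤 ⊕ 𝔤*, E_A)` is a strong Dirac morphism, where `E_A` is the
Lagrangian subspace corresponding to `A ∈ O(𝔤)`, then `dim V` is even iff
`det A = 1`. -/
theorem qHamiltonian_parity
    {V G : Type*} [AddCommGroup V] [Module ℝ V] [FiniteDimensional ℝ V]
    [NormedAddCommGroup G] [InnerProductSpace ℝ G] [FiniteDimensional ℝ G]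
    (A : G ≃ₗᵢ[ℝ] G)
    (Θ : V →ₗ[ℝ] G) (ω : V →ₗ[ℝ] Module.Dual ℝ V) (hω : ∀ v, ω v v = 0)
    (hfwd : (lagrangianOf A : Set (G × G))
      = {y | ∃ x ∈ (⊤ : Submodule ℝ V).prod (⊥ : Submodule ℝ (Module.Dual ℝ V)),
          mixedRel Θ ω x y})
    (hstrong : ∀ x ∈ (⊤ : Submodule ℝ V).prod (⊥ : Submodule ℝ (Module.Dual ℝ V)),
      mixedRel Θ ω x 0 → x = 0) :
    Even (Module.finrank ℝ V) ↔ LinearMap.det A.toLinearEquiv.toLinearMap = 1 := by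
  classical
  set f := A.toLinearEquiv.toLinearMap with hfdef
  set fs := A.symm.toLinearEquiv.toLinearMap with hfsdef
  set N : Submodule ℝ (G × G) :=
    lagrangianOf A ⊓ ((⊤ : Submodule ℝ G).prod (⊥ : Submodule ℝ G)) with hNdef
  -- the map from `ker ω` to `N`
  let S : LinearMap.ker ω →ₗ[ℝ] G × G :=
    (Θ.prod (0 : V →ₗ[ℝ] G)) ∘ₗ (LinearMap.ker ω).subtype
  have hSapp : ∀ x : LinearMap.ker ω, S x = (Θ (x : V), 0) := fun _ => rfl
  have hSinj : Function.Injective S := by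
    rw [← LinearMap.ker_eq_bot, LinearMap.ker_eq_bot']
    intro x hx
    have hΘ : Θ (x : V) = 0 := by
      have := congrArg Prod.fst (hSapp x ▸ hx); simpa using this
    have hωx : ω (x : V) = 0 := x.2
    have hx0 : ((x : V), (0 : Module.Dual ℝ V)) = 0 :=
      hstrong ((x : V), 0) ⟨Submodule.mem_top, Submodule.zero_mem _⟩
        ⟨by simp [hΘ], fun u => by simp [hωx]⟩
    exact Subtype.ext (congrArg Prod.fst hx0)
  have hSrange : LinearMap.range S = N := by
    apply le_antisymm
    · rintro y ⟨x, rfl⟩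
      rw [hSapp x]
      refine ⟨?_, Submodule.mem_top, Submodule.zero_mem _⟩
      have : (Θ (x : V), (0 : G)) ∈ (lagrangianOf A : Set (G × G)) := by
        rw [hfwd]
        refine ⟨((x : V), 0), ⟨Submodule.mem_top, Submodule.zero_mem _⟩, rfl, fun u => ?_⟩
        have hωx : ω (x : V) = 0 := x.2
        simp [hωx]
      exact this
    · rintro y ⟨hy1, -, hy2⟩
      have hy2' : y.2 = 0 := (Submodule.mem_bot ℝ).1 hy2
      have hmem : y ∈ {y | ∃ x ∈ (⊤ : Submodule ℝ V).prod
          (⊥ : Submodule ℝ (Module.Dual ℝ V)), mixedRel Θ ω x y} := by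
        rw [← hfwd]; exact hy1
      obtain ⟨⟨v, α⟩, ⟨-, hα⟩, h1, h2⟩ := hmem
      have hα0 : α = 0 := (Submodule.mem_bot ℝ).1 hα
      have hωv : ω v = 0 := by
        ext u
        have := h2 u
        rw [hα0, hy2'] at this
        simpa using this.symm
      refine ⟨⟨v, hωv⟩, ?_⟩
      rw [hSapp]
      exact Prod.ext h1.symm hy2'.symm
  -- the map from `ker (f + 1)` to `N`
  set K := LinearMap.ker (f + LinearMap.id) with hKdef
  have hKmem : ∀ x, x ∈ K ↔ f x = -x := by
    intro x
    rw [hKdef, LinearMap.mem_ker, LinearMap.add_apply, LinearMap.id_apply,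
      add_eq_zero_iff_eq_neg]
  have hfsK : ∀ x, f x = -x ↔ fs x = -x := by
    intro x
    constructor <;> intro h
    · have h2 : fs (f x) = x := A.symm_apply_apply x
      rw [h, map_neg] at h2
      exact neg_eq_iff_eq_neg.1 h2
    · have h2 : f (fs x) = x := A.apply_symm_apply x
      rw [h, map_neg] at h2
      exact neg_eq_iff_eq_neg.1 h2
  let S₂ : K →ₗ[ℝ] G × G :=
    (((2 : ℝ) • (LinearMap.id : G →ₗ[ℝ] G)).prod 0) ∘ₗ K.subtype
  have hS₂app : ∀ x : K, S₂ x = ((2 : ℝ) • (x : G), 0) := fun _ => rfl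
  have hS₂inj : Function.Injective S₂ := by
    rw [← LinearMap.ker_eq_bot, LinearMap.ker_eq_bot']
    intro x hx
    have := congrArg Prod.fst (hS₂app x ▸ hx)
    simp only [Prod.fst_zero, smul_eq_zero] at this
    rcases this with h | h
    · norm_num at h
    · exact Subtype.ext h
  have hS₂range : LinearMap.range S₂ = N := by
    apply le_antisymm
    · rintro y ⟨x, rfl⟩
      rw [hS₂app x]
      refine ⟨?_, Submodule.mem_top, Submodule.zero_mem _⟩
      have hfsx : fs (x : G) = -(x : G) := (hfsK _).1 ((hKmem _).1 x.2)
      refine ⟨(x : G), ?_⟩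
      simp only [LinearMap.prod_apply, Function.prod, LinearMap.sub_apply, LinearMap.smul_apply,
        LinearMap.add_apply, LinearMap.id_apply, ← hfsdef, hfsx]
      rw [Prod.mk.injEq]
      refine ⟨by rw [sub_neg_eq_add, two_smul], by simp⟩
    · rintro y ⟨hy1, -, hy2⟩
      have hy2' : y.2 = 0 := (Submodule.mem_bot ℝ).1 hy2
      obtain ⟨ξ, hξ⟩ := hy1
      simp only [LinearMap.prod_apply, Function.prod, LinearMap.sub_apply, LinearMap.smul_apply,
        LinearMap.add_apply, LinearMap.id_apply, ← hfsdef] at hξ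
      have hsnd : (2⁻¹ : ℝ) • (ξ + fs ξ) = y.2 := by rw [← hξ]
      have hsum : ξ + fs ξ = 0 := by
        rw [hy2'] at hsnd
        have := smul_eq_zero.1 hsnd
        rcases this with h | h
        · norm_num at h
        · exact h
      have hfsξ : fs ξ = -ξ := eq_neg_of_add_eq_zero_right hsum
      have hfξ : f ξ = -ξ := (hfsK _).2 hfsξ
      have hfst : ξ - fs ξ = y.1 := by rw [← hξ]
      refine ⟨⟨ξ, (hKmem _).2 hfξ⟩, ?_⟩
      rw [hS₂app]
      refine Prod.ext ?_ hy2'.symm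
      show (2 : ℝ) • ξ = y.1
      rw [← hfst, hfsξ, sub_neg_eq_add, two_smul]
  -- put everything together
  have e1 : finrank ℝ (LinearMap.ker ω) = finrank ℝ N := by
    rw [← hSrange]; exact (LinearMap.finrank_range_of_inj hSinj).symm
  have e2 : finrank ℝ K = finrank ℝ N := by
    rw [← hS₂range]; exact (LinearMap.finrank_range_of_inj hS₂inj).symm
  have hdet := isom_det_eq_neg_one_pow A
  rw [← hfdef, ← hKdef] at hdet
  rw [even_iff_even_ker ω hω, e1, ← e2, hdet]
  exact (neg_one_pow_eq_one_iff_even (by norm_num : (-1 : ℝ) ≠ 1)).symm
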